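/- In LIC there exist paths P, P1, P2 such that the family {P,P1,P2} is admissible, P has one end in T and the other end in T', P1 is a path from s1 to s1', and P2 is a path from s2 to s2'. Also, in LIC there exist paths Q, Q1, Q2 such that the family {Q,Q1,Q2} is admissible, Q has one end in T and the other end in T', Q1 is a path from s3 to s3', and Q2 is a path from s4 to s4'. -/

import Mathlib

namespace TwoPairs

/-- The vertices of the gadget graphs `XCH` and `LIC`. -/
inductive V : Type
  | s1 | s2 | s3 | s4
  | s1' | s2' | s3' | s4'
  | t1 | t2 | t1' | t2'
  | u1 | u2 | u3 | u4 | u5 | u6 | u7 | u8 | u9 | u10 | u11 | u12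
  | a | b | c | d
  deriving DecidableEq

open V

/-- The 38 edges of `XCH` (and of `LIC`, which is the same graph). -/
def edgeList : List (V × V) :=
  [(s1,u1),(t1,u1),(u1,u2),(u1,u5),(s2,u2),(u2,u5),(u2,a),
   (s3,u3),(u3,a),(u3,u4),(u3,u6),(s4,u4),(t1',u4),(u4,u6),
   (u5,b),(u5,u7),(u6,c),(u6,u8),(a,b),(a,c),(b,d),(c,d),
   (b,u7),(c,u8),(d,u10),(d,u11),(u7,u9),(u7,u10),(u9,u10),
   (t2,u9),(s1',u9),(s2',u10),(u8,u11),(u8,u12),(u11,u12),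
   (s3',u11),(s4',u12),(t2',u12)]

/-- The underlying graph of the gadgets `XCH` and `LIC`. -/
def G : SimpleGraph V := SimpleGraph.fromRel (fun x y => (x, y) ∈ edgeList)

/-- Opposite pairs: an entry `(v, (x, y))` means that the two edges `vx` and `vy`
form an opposite pair at the degree-4 vertex `v`. -/
def oppList : List (V × V × V) :=
  [(u1,(t1,u2)),(u1,(s1,u5)),
   (u2,(u1,a)),(u2,(s2,u5)),
   (u3,(u4,a)),(u3,(s3,u6)),
   (u4,(t1',u3)),(u4,(s4,u6)),
   (u5,(u2,u7)),(u5,(u1,b)),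
   (u6,(u4,c)),(u6,(u3,u8)),
   (u7,(b,u9)),(u7,(u5,u10)),
   (u8,(u6,u11)),(u8,(c,u12)),
   (u9,(u10,t2)),(u9,(u7,s1')),
   (u10,(d,u9)),(u10,(u7,s2')),
   (u11,(u12,d)),(u11,(u8,s3')),
   (u12,(t2',u11)),(u12,(u8,s4')),
   (a,(u3,b)),(a,(u2,c)),
   (b,(a,u7)),(b,(u5,d)),
   (c,(a,u8)),(c,(u6,d)),
   (d,(b,u11)),(d,(c,u10))]

/-- The edges from `v` to `x` and from `v` to `y` form an opposite pair at `v`. -/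
def IsOpp (v x y : V) : Prop := (v,(x,y)) ∈ oppList ∨ (v,(y,x)) ∈ oppList

/-- Two edge-disjoint trails `P` and `Q` cross at `v` if `P` contains both edges of one
opposite pair at `v` and `Q` contains both edges of the other opposite pair at `v`. -/
def CrossAt {a1 a2 b1 b2 : V} (P : G.Walk a1 a2) (Q : G.Walk b1 b2) (v : V) : Prop :=
  ∃ x y x' y', IsOpp v x y ∧ IsOpp v x' y' ∧ s(x, y) ≠ s(x', y') ∧
    s(v, x) ∈ P.edges ∧ s(v, y) ∈ P.edges ∧ s(v, x') ∈ Q.edges ∧ s(v, y') ∈ Q.edges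

/-- Two paths are edge-disjoint if no edge lies on both. -/
def EdgeDisjoint {a1 a2 b1 b2 : V} (P : G.Walk a1 a2) (Q : G.Walk b1 b2) : Prop :=
  ∀ e, e ∈ P.edges → e ∉ Q.edges

/-- The crossing vertices of `XCH`. -/
def xchCross : Set V := {a, b, c, d}

/-- The crossing vertices of `LIC`. -/
def licCross : Set V := {a, b, c, d, u5, u6}

/-- Two members of a family of paths are admissible (w.r.t. the set `cs` of crossing
vertices) if they are edge-disjoint and do not cross at any non-crossing vertex. -/
def GoodPair (cs : Set V) {a1 a2 b1 b2 : V} (P : G.Walk a1 a2) (Q : G.Walk b1 b2) : Prop :=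
  EdgeDisjoint P Q ∧ ∀ v ∉ cs, ¬ CrossAt P Q v

def Sset : Set V := {s1, s2, s3, s4}
def S'set : Set V := {s1', s2', s3', s4'}
def Tset : Set V := {t1, t2}
def T'set : Set V := {t1', t2'}

end TwoPairs

namespace TwoPairs
open V

instance : Fintype V :=
  ⟨⟨↑([s1, s2, s3, s4, s1', s2', s3', s4', t1, t2, t1', t2', u1, u2, u3, u4, u5, u6, u7, u8,
      u9, u10, u11, u12, a, b, c, d] : List V), by decide⟩, fun x => by cases x <;> decide⟩

instance : DecidableRel G.Adj := fun x y =>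
  decidable_of_iff (x ≠ y ∧ ((x, y) ∈ edgeList ∨ (y, x) ∈ edgeList))
    (by rw [G, SimpleGraph.fromRel_adj])

/-- Bounded (decidable) version of `CrossAt`, phrased on edge lists. -/
def CrossAtB (Pe Qe : List (Sym2 V)) (v : V) : Prop :=
  ∃ p ∈ oppList, p.1 = v ∧ s(v, p.2.1) ∈ Pe ∧ s(v, p.2.2) ∈ Pe ∧
    ∃ q ∈ oppList, q.1 = v ∧ s(p.2.1, p.2.2) ≠ s(q.2.1, q.2.2) ∧
      s(v, q.2.1) ∈ Qe ∧ s(v, q.2.2) ∈ Qe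

instance (Pe Qe : List (Sym2 V)) (v : V) : Decidable (CrossAtB Pe Qe v) := by
  unfold CrossAtB; infer_instance

instance (l1 l2 : List (Sym2 V)) : Decidable (l1.Disjoint l2) :=
  inferInstanceAs (Decidable (∀ x ∈ l1, x ∉ l2))

lemma crossAtB_of_crossAt {a1 a2 b1 b2 v : V} {P : G.Walk a1 a2} {Q : G.Walk b1 b2}
    (h : CrossAt P Q v) : CrossAtB P.edges Q.edges v := by
  obtain ⟨x, y, x', y', h1, h2, hne, e1, e2, e3, e4⟩ := h
  rcases h1 with h1 | h1 <;> rcases h2 with h2 | h2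
  · exact ⟨_, h1, rfl, e1, e2, _, h2, rfl, hne, e3, e4⟩
  · exact ⟨_, h1, rfl, e1, e2, _, h2, rfl, by simpa [Sym2.eq_swap] using hne, e4, e3⟩
  · exact ⟨_, h1, rfl, e2, e1, _, h2, rfl, by simpa [Sym2.eq_swap] using hne, e3, e4⟩
  · exact ⟨_, h1, rfl, e2, e1, _, h2, rfl, by simpa [Sym2.eq_swap] using hne, e4, e3⟩

lemma goodPair_of {a1 a2 b1 b2 : V} {P : G.Walk a1 a2} {Q : G.Walk b1 b2}
    (Pe Qe : List (Sym2 V)) (hP : P.edges = Pe) (hQ : Q.edges = Qe)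
    (h1 : Pe.Disjoint Qe)
    (h2 : ∀ v : V, v ∉ ([a, b, c, d, u5, u6] : List V) → ¬ CrossAtB Pe Qe v) :
    GoodPair licCross P Q := by
  refine ⟨by rw [EdgeDisjoint, hP, hQ]; exact h1, fun v hv hc => h2 v ?_ ?_⟩
  · simpa [licCross] using hv
  · have := crossAtB_of_crossAt hc
    rwa [hP, hQ] at this

/-- `P : t1 - u1 - u5 - b - d - u11 - u12 - t2'` -/
def wP : G.Walk t1 t2' :=
  .cons (v := u1) (by decide) (.cons (v := u5) (by decide) (.cons (v := b) (by decide) (.cons (v := d) (by decide) (.cons (v := u11) (by decide) (.cons (v := u12) (by decide) (.cons (v := t2') (by decide) (.nil)))))))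

/-- `P1 : s1 - u1 - u2 - u5 - u7 - u9 - s1'` -/
def wP1 : G.Walk s1 s1' :=
  .cons (v := u1) (by decide) (.cons (v := u2) (by decide) (.cons (v := u5) (by decide) (.cons (v := u7) (by decide) (.cons (v := u9) (by decide) (.cons (v := s1') (by decide) (.nil))))))

/-- `P2 : s2 - u2 - a - c - d - u10 - s2'` -/
def wP2 : G.Walk s2 s2' :=
  .cons (v := u2) (by decide) (.cons (v := a) (by decide) (.cons (v := c) (by decide) (.cons (v := d) (by decide) (.cons (v := u10) (by decide) (.cons (v := s2') (by decide) (.nil))))))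

/-- `Q : t2 - u9 - u10 - d - c - u6 - u4 - t1'` -/
def wQ : G.Walk t2 t1' :=
  .cons (v := u9) (by decide) (.cons (v := u10) (by decide) (.cons (v := d) (by decide) (.cons (v := c) (by decide) (.cons (v := u6) (by decide) (.cons (v := u4) (by decide) (.cons (v := t1') (by decide) (.nil)))))))

/-- `Q1 : s3 - u3 - a - b - d - u11 - s3'` -/
def wQ1 : G.Walk s3 s3' :=
  .cons (v := u3) (by decide) (.cons (v := a) (by decide) (.cons (v := b) (by decide) (.cons (v := d) (by decide) (.cons (v := u11) (by decide) (.cons (v := s3') (by decide) (.nil))))))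

/-- `Q2 : s4 - u4 - u3 - u6 - u8 - u12 - s4'` -/
def wQ2 : G.Walk s4 s4' :=
  .cons (v := u4) (by decide) (.cons (v := u3) (by decide) (.cons (v := u6) (by decide) (.cons (v := u8) (by decide) (.cons (v := u12) (by decide) (.cons (v := s4') (by decide) (.nil))))))


lemma wP_edges : wP.edges =
    [s(t1,u1), s(u1,u5), s(u5,b), s(b,d), s(d,u11), s(u11,u12), s(u12,t2')] := rfl
lemma wP1_edges : wP1.edges =
    [s(s1,u1), s(u1,u2), s(u2,u5), s(u5,u7), s(u7,u9), s(u9,s1')] := rfl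
lemma wP2_edges : wP2.edges =
    [s(s2,u2), s(u2,a), s(a,c), s(c,d), s(d,u10), s(u10,s2')] := rfl
lemma wQ_edges : wQ.edges =
    [s(t2,u9), s(u9,u10), s(u10,d), s(d,c), s(c,u6), s(u6,u4), s(u4,t1')] := rfl
lemma wQ1_edges : wQ1.edges =
    [s(s3,u3), s(u3,a), s(a,b), s(b,d), s(d,u11), s(u11,s3')] := rfl
lemma wQ2_edges : wQ2.edges =
    [s(s4,u4), s(u4,u3), s(u3,u6), s(u6,u8), s(u8,u12), s(u12,s4')] := rfl

set_option maxRecDepth 20000 in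
/-- Lemma `lic-12`: in `LIC` there is an admissible family consisting of
a `(T,T')`-path, an `(s1,s1')`-path and an `(s2,s2')`-path; and also an admissible family
consisting of a `(T,T')`-path, an `(s3,s3')`-path and an `(s4,s4')`-path. -/
theorem statement4 :
    (∃ (τ : V) (_ : τ ∈ Tset) (τ' : V) (_ : τ' ∈ T'set)
       (P : G.Walk τ τ') (P1 : G.Walk s1 s1') (P2 : G.Walk s2 s2'),
       P.IsTrail ∧ P1.IsTrail ∧ P2.IsTrail ∧
       GoodPair licCross P P1 ∧ GoodPair licCross P P2 ∧ GoodPair licCross P1 P2) ∧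
    (∃ (τ : V) (_ : τ ∈ Tset) (τ' : V) (_ : τ' ∈ T'set)
       (Q : G.Walk τ τ') (Q1 : G.Walk s3 s3') (Q2 : G.Walk s4 s4'),
       Q.IsTrail ∧ Q1.IsTrail ∧ Q2.IsTrail ∧
       GoodPair licCross Q Q1 ∧ GoodPair licCross Q Q2 ∧ GoodPair licCross Q1 Q2) := by
  refine ⟨⟨t1, by simp [Tset], t2', by simp [T'set], wP, wP1, wP2, ?_, ?_, ?_,
            goodPair_of _ _ wP_edges wP1_edges (by decide) (by decide),
            goodPair_of _ _ wP_edges wP2_edges (by decide) (by decide),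
            goodPair_of _ _ wP1_edges wP2_edges (by decide) (by decide)⟩,
          ⟨t2, by simp [Tset], t1', by simp [T'set], wQ, wQ1, wQ2, ?_, ?_, ?_,
            goodPair_of _ _ wQ_edges wQ1_edges (by decide) (by decide),
            goodPair_of _ _ wQ_edges wQ2_edges (by decide) (by decide),
            goodPair_of _ _ wQ1_edges wQ2_edges (by decide) (by decide)⟩⟩ <;>
    rw [SimpleGraph.Walk.isTrail_def] <;>
    first
      | (rw [wP_edges]; decide) | (rw [wP1_edges]; decide) | (rw [wP2_edges]; decide)
      | (rw [wQ_edges]; decide) | (rw [wQ1_edges]; decide) | (rw [wQ2_edges]; decide)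

end TwoPairs
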